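/- arXiv:2508.02572 — 5 statements merged into one kernel-verified Lean document; each statement's English description precedes it below -/
import Mathlib

section
/- For the facility location with fair outliers LP, the integrality gap is unbounded: for every M ≥ 2 and every f > 0, there is an instance with one facility of opening cost f and M co-located clients (all distances zero) with outlier budget ℓ = M - 1, such that the LP optimum is at most f/M while every feasible integral solution has cost at least f. Hence the ratio of integral optimum to LP optimum is at least M. -/
/-- Unbounded integrality gap of the fair-outliers facility location LP:
one facility of cost `f`, `M` co-located clients (all distances `0`),
outlier budget `M - 1`, a single group.  The LP has a feasible solution of
cost at most `f / M`, while every feasible integral solution has cost at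
least `f`; hence the gap is at least `M`. -/
theorem integrality_gap_unbounded (M : ℕ) (f : ℝ) (hM : 2 ≤ M) (hf : 0 < f) :
    (∃ (x z : Fin M → ℝ) (y : ℝ),
      (∀ j, 0 ≤ x j ∧ x j ≤ 1) ∧ (∀ j, 0 ≤ z j ∧ z j ≤ 1) ∧ (0 ≤ y ∧ y ≤ 1) ∧
      (∀ j, 1 ≤ x j + z j) ∧ (∀ j, x j ≤ y) ∧
      (∑ j, z j ≤ (M : ℝ) - 1) ∧
      f * y + ∑ j, (0 : ℝ) * x j ≤ f / M) ∧
    (∀ (x z : Fin M → ℝ) (y : ℝ),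
      (∀ j, x j = 0 ∨ x j = 1) → (∀ j, z j = 0 ∨ z j = 1) → (y = 0 ∨ y = 1) →
      (∀ j, 1 ≤ x j + z j) → (∀ j, x j ≤ y) →
      (∑ j, z j ≤ (M : ℝ) - 1) →
      f ≤ f * y + ∑ j, (0 : ℝ) * x j) ∧
    f ≤ (M : ℝ) * (f / M) := by
  have hM0 : (0 : ℝ) < M := by positivity
  have hM1 : (1 : ℝ) ≤ M := by exact_mod_cast Nat.one_le_of_lt hM
  refine ⟨⟨fun _ => 1 / M, fun _ => 1 - 1 / M, 1 / M, ?_, ?_, ?_, ?_, ?_, ?_, ?_⟩, ?_, ?_⟩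
  · intro j
    constructor
    · positivity
    · rw [div_le_one hM0]; linarith
  · intro j
    constructor
    · have : (1 : ℝ) / M ≤ 1 := by rw [div_le_one hM0]; linarith
      linarith
    · have : (0 : ℝ) ≤ 1 / M := by positivity
      linarith
  · constructor
    · positivity
    · rw [div_le_one hM0]; linarith
  · intro j; ring_nf; rfl
  · intro j; exact le_rfl
  · simp only [Finset.sum_const, Finset.card_univ, Fintype.card_fin, nsmul_eq_mul]
    rw [mul_sub, mul_one, mul_one_div, div_self (ne_of_gt hM0)]
  · simp [mul_one_div, div_eq_mul_inv]
  · intro x z y hx hz hy h1 h2 hsum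
    rcases hy with hy0 | hy1
    · exfalso
      have hz1 : ∀ j, z j = 1 := by
        intro j
        have := h1 j
        have := h2 j
        rcases hz j with h | h
        · rcases hx j with hxj | hxj <;> linarith
        · exact h
      have : ∑ j, z j = (M : ℝ) := by
        simp [hz1, Finset.sum_const, Finset.card_univ]
      linarith
    · simp [hy1]
  · rw [mul_div_cancel₀ _ (ne_of_gt hM0)]
end

section
/- Any optimal solution to k-median with fair outliers, with cost O_C and at most ℓ_g outliers per group g, is a feasible solution to the corresponding k-median with penalties instance (penalties p_j = O_C/(γ·ℓ_g) for j ∈ C_g) of cost at most O_C·(1 + ω/γ). Hence the penalty-instance optimum satisfies O_P ≤ O_C·(1 + ω/γ). -/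
/-- The optimal fair solution `(S, O)` (at most `k` facilities, at most `ℓ g`
outliers per group, connection cost `OC`) is feasible for the penalty instance
with penalties `p j = OC / (γ * ℓ (grp j))`, and its penalty-instance cost is
at most `OC * (1 + ω / γ)`; hence the penalty optimum `OP` is at most
`OC * (1 + ω / γ)`. -/
theorem fair_solution_feasible_for_penalties
    {F C : Type*} [Fintype C] [DecidableEq C] (ω k : ℕ)
    (dist : F → C → ℝ) (hd : ∀ i j, 0 ≤ dist i j)
    (grp : C → Fin ω) (ℓ : Fin ω → ℝ) (hℓ : ∀ g, 0 < ℓ g)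
    (γ OC OP : ℝ) (hγ : 0 < γ) (hOC : 0 ≤ OC)
    (p : C → ℝ) (hp : ∀ j, p j = OC / (γ * ℓ (grp j)))
    (S : Finset F) (hSne : S.Nonempty) (hSk : S.card ≤ k)
    (O : Finset C)
    (hfair : ∀ g, ((O.filter (fun j => grp j = g)).card : ℝ) ≤ ℓ g)
    (hcost : OC = ∑ j ∈ Oᶜ, S.inf' hSne (fun i => dist i j))
    (hOP : ∀ (S' : Finset F) (hS' : S'.Nonempty), S'.card ≤ k →
      ∀ O' : Finset C,
        OP ≤ (∑ j ∈ O'ᶜ, S'.inf' hS' (fun i => dist i j)) + ∑ j ∈ O', p j) :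
    ((∑ j ∈ Oᶜ, S.inf' hSne (fun i => dist i j)) + ∑ j ∈ O, p j
        ≤ OC * (1 + ω / γ)) ∧
    OP ≤ OC * (1 + ω / γ) := by
  have hpen : ∑ j ∈ O, p j ≤ OC * ω / γ := by
    have h1 : ∑ j ∈ O, p j
        = ∑ g : Fin ω, ∑ j ∈ O.filter (fun j => grp j = g), p j := by
      rw [Finset.sum_fiberwise]
    have h2 : ∀ g : Fin ω, ∑ j ∈ O.filter (fun j => grp j = g), p j ≤ OC / γ := by
      intro g
      have : ∑ j ∈ O.filter (fun j => grp j = g), p j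
          = ((O.filter (fun j => grp j = g)).card : ℝ) * (OC / (γ * ℓ g)) := by
        rw [Finset.sum_congr rfl (fun j hj => by
          rw [hp j, (Finset.mem_filter.mp hj).2]), Finset.sum_const, nsmul_eq_mul]
      rw [this]
      have hcard := hfair g
      have hg := hℓ g
      have hq : 0 ≤ OC / (γ * ℓ g) := by positivity
      calc ((O.filter (fun j => grp j = g)).card : ℝ) * (OC / (γ * ℓ g))
          ≤ ℓ g * (OC / (γ * ℓ g)) := by nlinarith
        _ = OC / γ := by
            rw [mul_comm γ (ℓ g), ← div_div, mul_div_assoc']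
            rw [mul_div_cancel₀ _ hg.ne']
    calc ∑ j ∈ O, p j = ∑ g : Fin ω, ∑ j ∈ O.filter (fun j => grp j = g), p j := h1
      _ ≤ ∑ _g : Fin ω, OC / γ := Finset.sum_le_sum (fun g _ => h2 g)
      _ = (ω : ℝ) * (OC / γ) := by simp [Finset.sum_const, mul_comm]
      _ = OC * ω / γ := by ring
  have hmain : (∑ j ∈ Oᶜ, S.inf' hSne (fun i => dist i j)) + ∑ j ∈ O, p j
      ≤ OC * (1 + ω / γ) := by
    rw [← hcost]
    have : OC * (1 + ω / γ) = OC + OC * ω / γ := by ring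
    linarith
  exact ⟨hmain, le_trans (hOP S hSne hSk O) hmain⟩
end

section
/- Let V be a finite set of d-dimensional nonnegative integer vectors with all entries less than L, let T be a target with all entries less than L, and fix k' ≤ |V|. Define V' by mapping each v ∈ V to v' = (v_1, …, v_d, L - v_1, …, L - v_d), and T' = (t_1, …, t_d, k'L - t_1, …, k'L - t_d). Then there exists U ⊆ V with |U| = k' and ∑_{v ∈ U} v = T if and only if there exists U' ⊆ V' with |U'| ≤ k' and ∑_{v' ∈ U'} v'_j ≥ T'_j for all j = 1, …, 2d, provided L > k'·max_j t_j. -/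
/-- Reduction from kMSS (exactly `k'` vectors, exact sum) to kMSS≥
(at most `k'` vectors, coordinate-wise lower bounds), via the
coordinate-doubling construction. -/
theorem kmss_iff_kmss_ge
    {d : ℕ} (V : Finset (Fin d → ℕ)) (T : Fin d → ℕ) (L k' : ℕ)
    (hV : ∀ v ∈ V, ∀ j, v j < L) (hT : ∀ j, T j < L)
    (hk' : k' ≤ V.card) (hL : ∀ j, k' * T j < L) :
    (∃ U ⊆ V, U.card = k' ∧ ∀ j, ∑ v ∈ U, v j = T j) ↔
    (∃ U' ⊆ V.image (fun v : Fin d → ℕ =>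
        (Sum.elim (fun j => (v j : ℤ)) (fun j => (L : ℤ) - v j) :
          Fin d ⊕ Fin d → ℤ)),
      U'.card ≤ k' ∧
      ∀ j : Fin d ⊕ Fin d,
        Sum.elim (fun j => (T j : ℤ)) (fun j => (k' : ℤ) * L - T j) j ≤
          ∑ w ∈ U', w j) := by
  set f : (Fin d → ℕ) → (Fin d ⊕ Fin d → ℤ) :=
    fun v => Sum.elim (fun j => (v j : ℤ)) (fun j => (L : ℤ) - v j) with hf
  have finj : Function.Injective f := by
    intro a b h
    funext j
    have := congrFun h (Sum.inl j)
    simpa [f] using this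
  constructor
  · rintro ⟨U, hUV, hcard, hsum⟩
    refine ⟨U.image f, Finset.image_subset_image hUV, ?_, ?_⟩
    · calc (U.image f).card ≤ U.card := Finset.card_image_le
        _ = k' := hcard
    · intro j
      rw [Finset.sum_image (fun a _ b _ h => finj h)]
      cases j with
      | inl j =>
        simp only [Sum.elim_inl, f]
        have : ∑ v ∈ U, (v j : ℤ) = (T j : ℤ) := by
          rw [← Nat.cast_sum, hsum j]
        exact this.ge
      | inr j =>
        simp only [Sum.elim_inr, f, Finset.sum_sub_distrib, Finset.sum_const,
          nsmul_eq_mul, hcard]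
        have : ∑ v ∈ U, (v j : ℤ) = (T j : ℤ) := by
          rw [← Nat.cast_sum, hsum j]
        rw [this]
  · rintro ⟨U', hU'sub, hU'card, hU'sum⟩
    by_cases hd : d = 0
    · subst hd
      obtain ⟨U, hUV, hUcard⟩ := Finset.exists_subset_card_eq hk'
      exact ⟨U, hUV, hUcard, fun j => j.elim0⟩
    have hL0 : 0 < L := by
      have j0 : Fin d := ⟨0, Nat.pos_of_ne_zero hd⟩
      exact lt_of_le_of_lt (Nat.zero_le _) (hL j0)
    set U := V.filter (fun v => f v ∈ U') with hU
    have hUV : U ⊆ V := Finset.filter_subset _ _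
    have himg : U.image f = U' := by
      apply Finset.Subset.antisymm
      · intro w hw
        obtain ⟨v, hv, rfl⟩ := Finset.mem_image.mp hw
        exact (Finset.mem_filter.mp hv).2
      · intro w hw
        obtain ⟨v, hv, rfl⟩ := Finset.mem_image.mp (hU'sub hw)
        exact Finset.mem_image.mpr ⟨v, Finset.mem_filter.mpr ⟨hv, hw⟩, rfl⟩
    have hcard : U.card = U'.card := by
      rw [← himg, Finset.card_image_of_injective _ finj]
    have hsum : ∀ j, ∑ w ∈ U', w j = ∑ v ∈ U, f v j := by
      intro j
      rw [← himg, Finset.sum_image (fun a _ b _ h => finj h)]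
    have hlow : ∀ j : Fin d, (T j : ℤ) ≤ ∑ v ∈ U, (v j : ℤ) := by
      intro j
      have := hU'sum (Sum.inl j)
      rw [hsum] at this
      simpa [f] using this
    have hhigh : ∀ j : Fin d,
        (k' : ℤ) * L - T j ≤ (U.card : ℤ) * L - ∑ v ∈ U, (v j : ℤ) := by
      intro j
      have := hU'sum (Sum.inr j)
      rw [hsum] at this
      simpa [f, Finset.sum_sub_distrib, Finset.sum_const, nsmul_eq_mul] using this
    have hcardk : U.card = k' := by
      have j0 : Fin d := ⟨0, Nat.pos_of_ne_zero hd⟩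
      have h1 := hlow j0
      have h2 := hhigh j0
      have hle : U.card ≤ k' := hcard ▸ hU'card
      have : (k' : ℤ) * L ≤ (U.card : ℤ) * L := by linarith
      have hk : (k' : ℤ) ≤ (U.card : ℤ) := by
        have hLpos : (0 : ℤ) < L := by exact_mod_cast hL0
        exact le_of_mul_le_mul_right this hLpos
      exact le_antisymm hle (by exact_mod_cast hk)
    refine ⟨U, hUV, hcardk, fun j => ?_⟩
    have h1 := hlow j
    have h2 := hhigh j
    rw [hcardk] at h2
    have : ∑ v ∈ U, (v j : ℤ) = (T j : ℤ) := by linarith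
    have : ((∑ v ∈ U, v j : ℕ) : ℤ) = ((T j : ℕ) : ℤ) := by
      rw [Nat.cast_sum]; exact this
    exact_mod_cast this
end

section
/- Consider the facility location with fair outliers instance built from a kMSS_≥ instance (V, T, k): for each vector v ∈ V create a facility with opening cost 1, and for each coordinate g ∈ {1,…,d}, co-locate v_g clients of group g at that facility; distinct facilities are at pairwise distance greater than k. Then there is a feasible solution of total cost at most k serving at least t_g clients of each group g if and only if (V, T, k) is a yes-instance of kMSS_≥. -/
lemma card_client_set {d : ℕ} (S : Finset (Fin d → ℕ)) (g : Fin d) :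
    (S.biUnion (fun v => (Finset.range (v g)).image
        (fun i => (v, g, i) : ℕ → (Fin d → ℕ) × Fin d × ℕ))).card
      = ∑ v ∈ S, v g := by
  rw [Finset.card_biUnion]
  · refine Finset.sum_congr rfl fun v _ => ?_
    rw [Finset.card_image_of_injective _ (fun a b h => by
      simpa using congrArg (fun c => c.2.2) h), Finset.card_range]
  · intro x _ y _ hxy
    simp only [Finset.disjoint_left, Finset.mem_image, Finset.mem_range]
    rintro c ⟨i, _, rfl⟩ ⟨j, _, h⟩
    exact hxy (congrArg Prod.fst h).symm

/-- Reduction from kMSS≥ to facility location with fair outliers.  For each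
vector `v ∈ V` there is a facility of opening cost `1`; for each group
`g : Fin d`, `v g` clients of group `g` (indexed by `i < v g`) are co-located
with that facility; distinct facilities are at distance `D > k`.  A client
`c = (v, g, i)` pays `0` if assigned to its co-located facility and `D`
otherwise.  There is a solution of total cost at most `k` serving at least
`T g` clients of every group `g` iff `(V, T, k)` is a yes-instance of
kMSS≥. -/
theorem flfo_iff_kmss_ge
    {d : ℕ} (V : Finset (Fin d → ℕ)) (T : Fin d → ℕ) (k : ℕ) (D : ℝ)
    (hD : (k : ℝ) < D) :
    (∃ S ⊆ V, ∃ W : Finset ((Fin d → ℕ) × Fin d × ℕ),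
      ∃ σ : (Fin d → ℕ) × Fin d × ℕ → (Fin d → ℕ),
      (∀ c ∈ W, c.1 ∈ V ∧ c.2.2 < c.1 c.2.1 ∧ σ c ∈ S) ∧
      (S.card : ℝ) + ∑ c ∈ W, (if c.1 = σ c then (0 : ℝ) else D) ≤ k ∧
      (∀ g, T g ≤ (W.filter (fun c => c.2.1 = g)).card)) ↔
    (∃ U ⊆ V, U.card ≤ k ∧ ∀ g, T g ≤ ∑ v ∈ U, v g) := by
  constructor
  · rintro ⟨S, hSV, W, σ, hW, hcost, hcov⟩
    have hDnn : (0 : ℝ) ≤ D := le_of_lt (lt_of_le_of_lt (Nat.cast_nonneg k) hD)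
    have hnn : ∀ c ∈ W, (0 : ℝ) ≤ (if c.1 = σ c then (0 : ℝ) else D) := by
      intro c _; split_ifs <;> simp [hDnn]
    have hall : ∀ c ∈ W, c.1 = σ c := by
      by_contra h
      push_neg at h
      obtain ⟨c0, hc0, hne⟩ := h
      have h1 : D ≤ ∑ c ∈ W, (if c.1 = σ c then (0 : ℝ) else D) := by
        have := Finset.single_le_sum hnn hc0
        simpa [hne] using this
      have h2 : (0 : ℝ) ≤ (S.card : ℝ) := Nat.cast_nonneg _
      linarith
    have hsum0 : ∑ c ∈ W, (if c.1 = σ c then (0 : ℝ) else D) = 0 :=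
      Finset.sum_eq_zero fun c hc => by simp [hall c hc]
    rw [hsum0, add_zero] at hcost
    refine ⟨S, hSV, by exact_mod_cast hcost, fun g => ?_⟩
    refine le_trans (hcov g) (le_trans (Finset.card_le_card ?_)
      (le_of_eq (card_client_set S g)))
    intro c hc
    simp only [Finset.mem_filter] at hc
    obtain ⟨hcW, hcg⟩ := hc
    obtain ⟨hcV, hlt, hσ⟩ := hW c hcW
    rw [← hall c hcW] at hσ
    simp only [Finset.mem_biUnion, Finset.mem_image, Finset.mem_range]
    exact ⟨c.1, hσ, c.2.2, by rw [← hcg]; exact hlt, by rw [← hcg]⟩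
  · rintro ⟨U, hUV, hcard, hcov⟩
    refine ⟨U, hUV,
      U.biUnion (fun v => Finset.univ.biUnion fun g =>
        (Finset.range (v g)).image fun i => (v, g, i)),
      Prod.fst, ?_, ?_, ?_⟩
    · intro c hc
      simp only [Finset.mem_biUnion, Finset.mem_image, Finset.mem_range,
        Finset.mem_univ, true_and] at hc
      obtain ⟨v, hvU, g, i, hi, rfl⟩ := hc
      exact ⟨hUV hvU, hi, hvU⟩
    · rw [Finset.sum_eq_zero (fun c _ => by simp), add_zero]
      exact_mod_cast hcard
    · intro g
      have heq : ((U.biUnion (fun v => Finset.univ.biUnion fun g' =>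
          (Finset.range (v g')).image fun i => (v, g', i))).filter
          (fun c => c.2.1 = g))
          = U.biUnion (fun v => (Finset.range (v g)).image
            (fun i => (v, g, i) : ℕ → (Fin d → ℕ) × Fin d × ℕ)) := by
        ext c
        simp only [Finset.mem_filter, Finset.mem_biUnion, Finset.mem_image,
          Finset.mem_range, Finset.mem_univ, true_and]
        constructor
        · rintro ⟨⟨v, hvU, g', i, hi, rfl⟩, hg⟩
          exact ⟨v, hvU, i, by simpa [← hg] using hi, by rw [← hg]⟩
        · rintro ⟨v, hvU, i, hi, rfl⟩
          exact ⟨⟨v, hvU, g, i, hi, rfl⟩, rfl⟩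
      rw [heq, card_client_set]
      exact hcov g
end

section
/- Suppose an algorithm for facility location (without outliers) on client set C_r returns a solution of cost at most α·LP(C_r), where LP(C_r) is the optimal LP value on C_r, and suppose a fractional feasible solution of the outlier LP of cost OPT_LP yields, after removing clients with fractional outlier value ≥ 1-ε and rescaling, a feasible fractional facility location solution on C_r of cost at most OPT_LP/ε. Then combining the returned facility location solution with the removed outlier set yields a solution to facility location with fair outliers of cost at most (α/ε)·OPT_LP and with at most (1+2ε)·ℓ_g outliers in each group g, for any ε ∈ (0, 1/2]. -/
/-- Composing an `α`-approximate facility location algorithm on the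
non-outlier clients `C_r` with the LP-based outlier-removal step yields an
`(α/ε)`-approximation for facility location with fair outliers that violates
each group's outlier budget by at most a factor `(1 + 2ε)`. -/
theorem composed_bicriteria_guarantee
    {C : Type*} [Fintype C] (ω : ℕ) (grp : C → Fin ω) (ℓ : Fin ω → ℝ)
    (zstar : C → ℝ) (ε α OPTLP LPCr A : ℝ)
    (hε0 : 0 < ε) (hε1 : ε ≤ 1/2) (hα : 0 < α)
    (hOPT : 0 ≤ OPTLP)
    (hz : ∀ j, 0 ≤ zstar j ∧ zstar j ≤ 1)
    (hgrp : ∀ g, ∑ j ∈ Finset.univ.filter (fun j => grp j = g), zstar j ≤ ℓ g)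
    (hLPCr : LPCr ≤ OPTLP / ε)
    (hA : A ≤ α * LPCr) :
    A ≤ (α / ε) * OPTLP ∧
    ∀ g, ((Finset.univ.filter
        (fun j => grp j = g ∧ 1 - ε ≤ zstar j)).card : ℝ) ≤
      (1 + 2 * ε) * ℓ g := by
  constructor
  · calc A ≤ α * LPCr := hA
    _ ≤ α * (OPTLP / ε) := by
        exact mul_le_mul_of_nonneg_left hLPCr hα.le
    _ = (α / ε) * OPTLP := by ring
  · intro g
    set S := Finset.univ.filter (fun j => grp j = g ∧ 1 - ε ≤ zstar j) with hS
    have hε' : 0 < 1 - ε := by linarith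
    have hsub : S ⊆ Finset.univ.filter (fun j => grp j = g) := by
      intro j hj
      simp only [hS, Finset.mem_filter] at hj ⊢
      exact ⟨hj.1, hj.2.1⟩
    have hℓ0 : 0 ≤ ℓ g :=
      le_trans (Finset.sum_nonneg fun j _ => (hz j).1) (hgrp g)
    have hcard : (S.card : ℝ) * (1 - ε) ≤ ℓ g := by
      calc (S.card : ℝ) * (1 - ε) = ∑ _j ∈ S, (1 - ε) := by
            rw [Finset.sum_const, nsmul_eq_mul]
      _ ≤ ∑ j ∈ S, zstar j := by
            apply Finset.sum_le_sum
            intro j hj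
            simp only [hS, Finset.mem_filter] at hj
            exact hj.2.2
      _ ≤ ∑ j ∈ Finset.univ.filter (fun j => grp j = g), zstar j := by
            refine Finset.sum_le_sum_of_subset_of_nonneg hsub ?_
            intro j _ _
            exact (hz j).1
      _ ≤ ℓ g := hgrp g
    have hfac : 1 ≤ (1 - ε) * (1 + 2 * ε) := by nlinarith [hε0, hε1, sq_nonneg ε]
    nlinarith [hcard, hℓ0, (Nat.cast_nonneg S.card : (0:ℝ) ≤ S.card), hε0.le, hfac]
end
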